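/- Let u be C³ and uniformly convex, ũ its Legendre transform, F a C¹ symmetric function on the positive cone, and define F̃(μ₁,…,μₙ) := −F(1/μ₁,…,1/μₙ). If u satisfies F(λ(D²u(x))) = f(x) + c on Ω with Du(Ω) = Ω̃, then ũ satisfies F̃(λ(D²ũ(x̃))) = −f(Dũ(x̃)) − c on Ω̃ with Dũ(Ω̃) = Ω. -/

import Mathlib

open Real Set

section Aux
open Polynomial


lemma exists_comp_perm {n : ℕ} (f g : Fin n → ℝ)
    (h : Multiset.map f Finset.univ.val = Multiset.map g Finset.univ.val) :
    ∃ σ : Equiv.Perm (Fin n), f = g ∘ σ := by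
  have hp : (List.ofFn f).Perm (List.ofFn g) := by
    rw [← Multiset.coe_eq_coe]
    simpa [List.ofFn_eq_map, ← Multiset.map_coe, Fin.univ_def, Finset.mk_coe] using h
  have hp' : (List.ofFn (f ∘ Tuple.sort f)).Perm (List.ofFn (g ∘ Tuple.sort g)) :=
    ((Tuple.sort f).ofFn_comp_perm f).trans (hp.trans ((Tuple.sort g).ofFn_comp_perm g).symm)
  have hs : List.ofFn (f ∘ Tuple.sort f) = List.ofFn (g ∘ Tuple.sort g) :=
    List.Perm.eq_of_sortedLE
      (List.sortedLE_ofFn_iff.2 (Tuple.monotone_sort f))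
      (List.sortedLE_ofFn_iff.2 (Tuple.monotone_sort g)) hp'
  have hfg : f ∘ Tuple.sort f = g ∘ Tuple.sort g := List.ofFn_injective hs
  refine ⟨(Tuple.sort f).symm.trans (Tuple.sort g), ?_⟩
  funext i
  have := congrFun hfg ((Tuple.sort f).symm i)
  simpa using this

lemma charpoly_conj {n : ℕ} (V W M : Matrix (Fin n) (Fin n) ℝ) (h1 : V * W = 1) :
    (V * M * W).charpoly = M.charpoly := by
  have key : Matrix.charmatrix (V * M * W) =
      V.map C * Matrix.charmatrix M * W.map C := by
    have hmap : (V * M * W).map C = V.map C * M.map C * W.map C := by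
      simp [Matrix.map_mul]
    have hVW : V.map C * W.map C = 1 := by
      rw [← Matrix.map_mul, h1]; simp
    rw [Matrix.charmatrix, Matrix.charmatrix, RingHom.mapMatrix_apply, RingHom.mapMatrix_apply, hmap]
    rw [Matrix.mul_sub, Matrix.sub_mul]
    congr 1
    rw [mul_assoc]
    rw [Matrix.scalar_commute X (fun r => Commute.all _ _) (W.map C)]
    rw [← mul_assoc, hVW, one_mul]
  rw [Matrix.charpoly, Matrix.charpoly, key, Matrix.det_mul, Matrix.det_mul]
  have hVW : V.map C * W.map C = 1 := by rw [← Matrix.map_mul, h1]; simp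
  have : (V.map C).det * (W.map C).det = 1 := by
    rw [← Matrix.det_mul, hVW, Matrix.det_one]
  calc (V.map C).det * (Matrix.charmatrix M).det * (W.map C).det
      = (Matrix.charmatrix M).det * ((V.map C).det * (W.map C).det) := by ring
    _ = (Matrix.charmatrix M).det := by rw [this, mul_one]

lemma charpoly_diag {n : ℕ} (d : Fin n → ℝ) :
    (Matrix.diagonal d).charpoly = ∏ i, (X - C (d i)) := by
  have : Matrix.charmatrix (Matrix.diagonal d) = Matrix.diagonal fun i => X - C (d i) := by
    ext i j
    by_cases hij : i = j
    · subst hij; simp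
    · rw [Matrix.charmatrix_apply_ne _ _ _ hij, Matrix.diagonal_apply_ne _ hij]
      simp [Matrix.diagonal_apply_ne _ hij]
  rw [Matrix.charpoly, this, Matrix.det_diagonal]

lemma hermitian_charpoly {n : ℕ} {A : Matrix (Fin n) (Fin n) ℝ} (hA : A.IsHermitian) :
    A.charpoly = ∏ i, (X - C (hA.eigenvalues i)) := by
  have hU : (Matrix.IsHermitian.eigenvectorUnitary hA : Matrix (Fin n) (Fin n) ℝ) *
      (star (Matrix.IsHermitian.eigenvectorUnitary hA) : Matrix (Fin n) (Fin n) ℝ) = 1 :=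
    Matrix.mem_unitaryGroup_iff.mp (Matrix.IsHermitian.eigenvectorUnitary hA).2
  have hdiag : Matrix.diagonal (RCLike.ofReal ∘ hA.eigenvalues) =
      Matrix.diagonal hA.eigenvalues := by
    congr 1
  calc A.charpoly
      = ((Matrix.IsHermitian.eigenvectorUnitary hA : Matrix (Fin n) (Fin n) ℝ) *
          Matrix.diagonal hA.eigenvalues *
          (star (Matrix.IsHermitian.eigenvectorUnitary hA) : Matrix (Fin n) (Fin n) ℝ)).charpoly := by
        conv_lhs => rw [hA.spectral_theorem]
        rw [hdiag]
        rw [Unitary.conjStarAlgAut_apply]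
    _ = (Matrix.diagonal hA.eigenvalues).charpoly := charpoly_conj _ _ _ hU
    _ = ∏ i, (X - C (hA.eigenvalues i)) := charpoly_diag _

lemma eig_inv {n : ℕ} {A B : Matrix (Fin n) (Fin n) ℝ} (hA : A.IsHermitian)
    (hB : B.IsHermitian) (hpd : A.PosDef) (h : A * B = 1) :
    ∃ σ : Equiv.Perm (Fin n), (fun i => (hB.eigenvalues i)⁻¹) = hA.eigenvalues ∘ σ := by
  set U : Matrix (Fin n) (Fin n) ℝ := (Matrix.IsHermitian.eigenvectorUnitary hA : Matrix (Fin n) (Fin n) ℝ) with hUdef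
  have hU1 : U * star U = 1 := Matrix.mem_unitaryGroup_iff.mp (Matrix.IsHermitian.eigenvectorUnitary hA).2
  have hU2 : star U * U = 1 := Matrix.mem_unitaryGroup_iff'.mp (Matrix.IsHermitian.eigenvectorUnitary hA).2
  set lam := hA.eigenvalues with hlam
  have hAspec : A = U * Matrix.diagonal lam * star U := by
    have := hA.spectral_theorem
    rw [Unitary.conjStarAlgAut_apply] at this
    exact this
  have hlpos : ∀ i, 0 < lam i := fun i => hpd.eigenvalues_pos i
  have hright : A * (U * Matrix.diagonal (fun i => (lam i)⁻¹) * star U) = 1 := by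
    rw [hAspec]
    calc U * Matrix.diagonal lam * star U * (U * Matrix.diagonal (fun i => (lam i)⁻¹) * star U)
        = U * (Matrix.diagonal lam * (star U * U) * Matrix.diagonal (fun i => (lam i)⁻¹)) * star U := by
          simp only [Matrix.mul_assoc]
      _ = U * (Matrix.diagonal lam * Matrix.diagonal (fun i => (lam i)⁻¹)) * star U := by
          rw [hU2, mul_one]
      _ = U * star U := by
          rw [Matrix.diagonal_mul_diagonal]
          have : (fun i => lam i * (lam i)⁻¹) = fun _ => (1 : ℝ) := by
            funext i; exact mul_inv_cancel₀ (hlpos i).ne'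
          rw [this, Matrix.diagonal_one, mul_one]
      _ = 1 := hU1
  have hBeq : B = U * Matrix.diagonal (fun i => (lam i)⁻¹) * star U := by
    have h1 : A⁻¹ = B := Matrix.inv_eq_right_inv h
    have h2 : A⁻¹ = U * Matrix.diagonal (fun i => (lam i)⁻¹) * star U :=
      Matrix.inv_eq_right_inv hright
    rw [← h1, h2]
  have hcp : B.charpoly = ∏ i, (X - C ((lam i)⁻¹)) := by
    rw [hBeq, charpoly_conj _ _ _ hU1, charpoly_diag]
  have hcp2 : B.charpoly = ∏ i, (X - C (hB.eigenvalues i)) := hermitian_charpoly hB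
  have hprod : (Multiset.map (fun a => X - C a) (Multiset.map hB.eigenvalues Finset.univ.val)).prod
      = (Multiset.map (fun a => X - C a) (Multiset.map (fun i => (lam i)⁻¹) Finset.univ.val)).prod := by
    rw [Multiset.map_map, Multiset.map_map]
    rw [← Finset.prod_eq_multiset_prod, ← Finset.prod_eq_multiset_prod]
    simp only [Function.comp]
    rw [← hcp2, ← hcp]
  have hmult : Multiset.map hB.eigenvalues Finset.univ.val
      = Multiset.map (fun i => (lam i)⁻¹) Finset.univ.val := by
    have := congrArg Polynomial.roots hprod
    rwa [Polynomial.roots_multiset_prod_X_sub_C, Polynomial.roots_multiset_prod_X_sub_C] at this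
  obtain ⟨σ, hσ⟩ := exists_comp_perm _ _ hmult
  refine ⟨σ, ?_⟩
  funext i
  have := congrFun hσ i
  simp only [Function.comp_apply] at this ⊢
  rw [this, inv_inv]

lemma grad_cd {n : ℕ} {v : EuclideanSpace ℝ (Fin n) → ℝ} {x : EuclideanSpace ℝ (Fin n)}
    (h : ContDiffAt ℝ 3 v x) : ContDiffAt ℝ 2 (gradient v) x := by
  have h1 : ContDiffAt ℝ 2 (fderiv ℝ v) x := h.fderiv_right (by norm_num)
  exact ((InnerProductSpace.toDual ℝ
    (EuclideanSpace ℝ (Fin n))).symm.toContinuousLinearEquiv.contDiff.contDiffAt).comp x h1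

lemma clm_apply_eq_sum {n : ℕ} (T : EuclideanSpace ℝ (Fin n) →L[ℝ] EuclideanSpace ℝ (Fin n))
    (z : EuclideanSpace ℝ (Fin n)) (j : Fin n) :
    T z j = ∑ i, z i * T (EuclideanSpace.single i 1) j := by
  have hz : z = ∑ i, z i • EuclideanSpace.single i (1 : ℝ) := by
    ext k
    rw [WithLp.ofLp_sum, Finset.sum_apply k Finset.univ (fun i => z i • EuclideanSpace.single i (1 : ℝ))]
    simp [EuclideanSpace.single_apply]
  conv_lhs => rw [hz]
  rw [map_sum]
  rw [WithLp.ofLp_sum, Finset.sum_apply j Finset.univ (fun i => T (z i • EuclideanSpace.single i (1 : ℝ)))]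
  simp

lemma grad_entry {n : ℕ} {v : EuclideanSpace ℝ (Fin n) → ℝ} {x : EuclideanSpace ℝ (Fin n)}
    (hd : DifferentiableAt ℝ (gradient v) x) (i j : Fin n) :
    fderiv ℝ (fun y => fderiv ℝ v y (EuclideanSpace.single j 1)) x (EuclideanSpace.single i 1)
      = fderiv ℝ (gradient v) x (EuclideanSpace.single i 1) j := by
  have e1 : (fun y => fderiv ℝ v y (EuclideanSpace.single j 1)) =
      fun y => (innerSL ℝ (EuclideanSpace.single j (1:ℝ))) (gradient v y) := by
    funext y
    rw [innerSL_apply_apply, real_inner_comm]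
    exact (InnerProductSpace.toDual_symm_apply).symm
  rw [e1]
  have h2 : HasFDerivAt (fun y => (innerSL ℝ (EuclideanSpace.single j (1:ℝ))) (gradient v y))
      ((innerSL ℝ (EuclideanSpace.single j (1:ℝ))).comp (fderiv ℝ (gradient v) x)) x :=
    (innerSL ℝ (EuclideanSpace.single j (1:ℝ))).hasFDerivAt.comp x hd.hasFDerivAt
  rw [h2.fderiv]
  simp [EuclideanSpace.inner_single_left]

end Aux

/-- The dual equation under Legendre transform: if `u` (C³, uniformly convex) satisfies
`F(λ(D²u x)) = f x + c` on `Ω` with `Du(Ω) = Ω̃`, and `ũ` is its Legendre transform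
(`ũ(Du x) = ⟨x, Du x⟩ − u x`, `Dũ ∘ Du = id`), then with `F̃(μ) := −F(1/μ₁,…,1/μₙ)` the dual
solution satisfies `F̃(λ(D²ũ x̃)) = −f(Dũ x̃) − c` on `Ω̃` and `Dũ(Ω̃) = Ω`. -/
theorem stmt13 {n : ℕ} (Ω Ωt : Set (EuclideanSpace ℝ (Fin n))) (hΩ : IsOpen Ω)
    (u ut : EuclideanSpace ℝ (Fin n) → ℝ) (f : EuclideanSpace ℝ (Fin n) → ℝ) (c : ℝ)
    (hu : ContDiffOn ℝ 3 u Ω) (hut : ContDiffOn ℝ 3 ut Ωt)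
    (F : (Fin n → ℝ) → ℝ)
    (hFsym : ∀ (v : Fin n → ℝ) (σ : Equiv.Perm (Fin n)), F (v ∘ σ) = F v)
    (H Ht : EuclideanSpace ℝ (Fin n) → Matrix (Fin n) (Fin n) ℝ)
    (hH : ∀ x i j, H x i j =
      fderiv ℝ (fun y => fderiv ℝ u y (EuclideanSpace.single j 1)) x (EuclideanSpace.single i 1))
    (hHt : ∀ x i j, Ht x i j =
      fderiv ℝ (fun y => fderiv ℝ ut y (EuclideanSpace.single j 1)) x (EuclideanSpace.single i 1))
    (hsym : ∀ x, (H x).IsHermitian) (hsymt : ∀ x, (Ht x).IsHermitian)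
    (hpd : ∀ x ∈ Ω, (H x).PosDef)
    (hleg : ∀ x ∈ Ω, ut (gradient u x) = inner ℝ x (gradient u x) - u x)
    (hinv : ∀ x ∈ Ω, gradient ut (gradient u x) = x)
    (himg : (fun x => gradient u x) '' Ω = Ωt)
    (heq : ∀ x ∈ Ω, F ((hsym x).eigenvalues) = f x + c) :
    (∀ xt ∈ Ωt, -F (fun i => ((hsymt xt).eigenvalues i)⁻¹) = -f (gradient ut xt) - c) ∧
    (fun xt => gradient ut xt) '' Ωt = Ω := by
  -- differentiability of gradient u on Ω
  have hcdu : ∀ x ∈ Ω, ContDiffAt ℝ 2 (gradient u) x := fun x hx =>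
    grad_cd ((hu.contDiffAt (hΩ.mem_nhds hx)))
  have hdu : ∀ x ∈ Ω, DifferentiableAt ℝ (gradient u) x := fun x hx =>
    (hcdu x hx).differentiableAt (by norm_num)
  -- matrix entries of H as the Fréchet derivative of the gradient
  have hHA : ∀ x ∈ Ω, ∀ i j, H x i j
      = fderiv ℝ (gradient u) x (EuclideanSpace.single i 1) j := by
    intro x hx i j
    rw [hH x i j, grad_entry (hdu x hx)]
  -- the derivative of gradient u is injective on Ω
  have hAinj : ∀ x ∈ Ω, ∀ z : EuclideanSpace ℝ (Fin n),
      fderiv ℝ (gradient u) x z = 0 → z = 0 := by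
    intro x hx z hz
    by_contra hzne
    set zf : Fin n → ℝ := fun k => z k with hzf
    have hquad := (hpd x hx).dotProduct_mulVec_pos (x := zf) (by
      intro h0
      apply hzne
      ext k
      exact congrFun h0 k)
    set A := fderiv ℝ (gradient u) x with hA
    have hdot : dotProduct (star zf) (Matrix.mulVec (H x) zf)
        = ∑ j, (A z) j * z j := by
      have hAz : ∀ j, (A z) j = ∑ i, z i * H x i j := by
        intro j
        rw [clm_apply_eq_sum A z j]
        exact Finset.sum_congr rfl fun i _ => by rw [hHA x hx i j]
      simp only [dotProduct, Matrix.mulVec, dotProduct, Pi.star_apply,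
        star_trivial]
      have e1 : ∀ i, zf i * ∑ j, H x i j * zf j = ∑ j, z i * H x i j * z j := by
        intro i; rw [Finset.mul_sum]; exact Finset.sum_congr rfl fun j _ => by ring
      rw [Finset.sum_congr rfl (fun i _ => e1 i), Finset.sum_comm]
      refine Finset.sum_congr rfl fun j _ => ?_
      rw [hAz j, Finset.sum_mul]
    rw [hz] at hdot
    have : dotProduct (star zf) (Matrix.mulVec (H x) zf) = 0 := by
      rw [hdot]
      simp
    rw [this] at hquad
    simp at hquad
  -- derivative as a continuous linear equivalence, strict derivative, open image
  have hmapnhds : ∀ x ∈ Ω, Filter.map (gradient u) (nhds x) = nhds (gradient u x) := by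
    intro x hx
    set A := fderiv ℝ (gradient u) x with hA
    have hinj : Function.Injective (A : EuclideanSpace ℝ (Fin n) →ₗ[ℝ] EuclideanSpace ℝ (Fin n)) := by
      intro a b hab
      have : A (a - b) = 0 := by
        simp only [map_sub] at hab ⊢
        rw [show (A : EuclideanSpace ℝ (Fin n) →ₗ[ℝ] EuclideanSpace ℝ (Fin n)) a = A a from rfl] at hab
        rw [show (A : EuclideanSpace ℝ (Fin n) →ₗ[ℝ] EuclideanSpace ℝ (Fin n)) b = A b from rfl] at hab
        rw [hab]
        simp
      have := hAinj x hx _ this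
      exact sub_eq_zero.mp this
    have hsurj := (LinearMap.injective_iff_surjective).mp hinj
    let e := LinearEquiv.ofBijective (A : EuclideanSpace ℝ (Fin n) →ₗ[ℝ] EuclideanSpace ℝ (Fin n)) ⟨hinj, hsurj⟩
    let E := e.toContinuousLinearEquiv
    have hEA : (E : EuclideanSpace ℝ (Fin n) →L[ℝ] EuclideanSpace ℝ (Fin n)) = A :=
      ContinuousLinearMap.ext fun v => rfl
    have hstrict : HasStrictFDerivAt (gradient u) A x :=
      (hcdu x hx).hasStrictFDerivAt (by norm_num)
    have hstrict' : HasStrictFDerivAt (gradient u)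
        (E : EuclideanSpace ℝ (Fin n) →L[ℝ] EuclideanSpace ℝ (Fin n)) x := by
      rw [hEA]; exact hstrict
    exact hstrict'.map_nhds_eq_of_equiv
  have hΩt_open : IsOpen Ωt := by
    rw [isOpen_iff_mem_nhds]
    intro xt hxt
    rw [← himg] at hxt
    obtain ⟨x, hx, rfl⟩ := hxt
    have h1 : (fun x => gradient u x) '' Ω ∈ Filter.map (gradient u) (nhds x) :=
      Filter.image_mem_map (hΩ.mem_nhds hx)
    rw [hmapnhds x hx] at h1
    rw [himg] at h1
    exact h1
  -- gradient ut is differentiable on Ωt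
  have hdut : ∀ xt ∈ Ωt, DifferentiableAt ℝ (gradient ut) xt := fun xt hxt =>
    (grad_cd (hut.contDiffAt (hΩt_open.mem_nhds hxt))).differentiableAt (by norm_num)
  -- the key matrix identity
  have hmul : ∀ x ∈ Ω, H x * Ht (gradient u x) = 1 := by
    intro x hx
    set xt := gradient u x with hxt
    have hxtmem : xt ∈ Ωt := by rw [← himg]; exact Set.mem_image_of_mem _ hx
    set A := fderiv ℝ (gradient u) x with hA
    set B := fderiv ℝ (gradient ut) xt with hB
    have hcomp : HasFDerivAt (fun y => gradient ut (gradient u y)) (B.comp A) x :=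
      by have := ((hdut xt hxtmem).hasFDerivAt.comp x (hdu x hx).hasFDerivAt); exact this
    have hev : (fun y => gradient ut (gradient u y)) =ᶠ[nhds x] id :=
      Filter.eventually_of_mem (hΩ.mem_nhds hx) (fun y hy => hinv y hy)
    have hBA : B.comp A = ContinuousLinearMap.id ℝ (EuclideanSpace ℝ (Fin n)) := by
      have h1 : fderiv ℝ (fun y => gradient ut (gradient u y)) x = B.comp A := hcomp.fderiv
      have h2 : fderiv ℝ (fun y => gradient ut (gradient u y)) x
          = fderiv ℝ (id : EuclideanSpace ℝ (Fin n) → EuclideanSpace ℝ (Fin n)) x :=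
        hev.fderiv_eq
      rw [← h1, h2, fderiv_id]
    have hHtB : ∀ k j, Ht xt k j = B (EuclideanSpace.single k 1) j := by
      intro k j
      rw [hHt xt k j, grad_entry (hdut xt hxtmem)]
    ext i j
    rw [Matrix.mul_apply, Matrix.one_apply]
    have step1 : ∑ k, H x i k * Ht xt k j
        = ∑ k, (A (EuclideanSpace.single i 1)) k * (B (EuclideanSpace.single k 1)) j := by
      refine Finset.sum_congr rfl fun k _ => by rw [hHA x hx i k, hHtB k j]
    rw [step1, ← clm_apply_eq_sum B (A (EuclideanSpace.single i 1)) j]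
    have : B (A (EuclideanSpace.single i 1)) = EuclideanSpace.single i 1 := by
      have := congrArg (fun T => T (EuclideanSpace.single i (1:ℝ))) hBA
      simpa using this
    rw [this]
    simp [EuclideanSpace.single_apply, eq_comm]
  constructor
  · intro xt hxt
    rw [← himg] at hxt
    obtain ⟨x, hx, rfl⟩ := hxt
    have hx' : gradient ut (gradient u x) = x := hinv x hx
    rw [hx']
    obtain ⟨σ, hσ⟩ := eig_inv (hsym x) (hsymt (gradient u x)) (hpd x hx) (hmul x hx)
    rw [hσ, hFsym _ σ, heq x hx]
    ring
  · apply Set.Subset.antisymm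
    · rintro y ⟨xt, hxt, rfl⟩
      rw [← himg] at hxt
      obtain ⟨x, hx, rfl⟩ := hxt
      show gradient ut (gradient u x) ∈ Ω
      rw [hinv x hx]
      exact hx
    · intro y hy
      exact ⟨gradient u y, by rw [← himg]; exact Set.mem_image_of_mem _ hy, hinv y hy⟩
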